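/- Let κ > 0, λ real, p ≠ 0, n ≥ 1, and let ω̄, ω_n(h), ω_{n+1}(h) be as in the Fourier analysis (ω_m(h) = -∑_{j=0}^{m} ((2^{j+2}κ/(3^j h²)) sin^{2j+2}(ph/2) + i(2^j λ/(3^j h)) sin(ph) sin^{2j}(ph/2)), ω̄ = -κp² - iλp). Then lim_{h→0⁺} (|ω_{n+1}(h) - ω̄|² - |ω_n(h) - ω̄|²)/h^{2n+4} = κ² p^{2n+8}/6^{n+2}. In particular, |ω_{n+1} - ω̄|² - |ω_n - ω̄|² ∼ (κ² p^{2n+8}/6^{n+2}) h^{2n+4} as h → 0. -/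

import Mathlib

open Finset in
/-- Fourier symbol of the `m`-th corrected mass-lumped Galerkin scheme, at mesh size `h`. -/
noncomputable def omegaCorr (kappa lam p h : ℝ) (m : ℕ) : ℂ :=
  -(∑ j ∈ range (m+1),
    ((((2:ℝ)^(j+2) * kappa / (3^j * h^2) * Real.sin (p*h/2) ^ (2*j+2) : ℝ) : ℂ) +
      Complex.I * (((2:ℝ)^j * lam / (3^j * h) * Real.sin (p*h)
        * Real.sin (p*h/2) ^ (2*j) : ℝ) : ℂ)))

open Finset Filter Topology Real


open Filter Topology Real

lemma lim_slope_core :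
    Tendsto (fun x : ℝ => (Real.sin x - x)/x^3) (𝓝[≠] 0) (𝓝 (-(1/6))) := by
  have h0 : Tendsto (fun x : ℝ => (Real.sin x - x)/x^3 - (-(1/6))) (𝓝[≠] 0) (𝓝 0) := by
    have hb : ∀ᶠ x : ℝ in 𝓝[≠] 0, ‖(Real.sin x - x)/x^3 - (-(1/6))‖ ≤ |x| * (5/96) := by
      filter_upwards [eventually_nhdsWithin_of_eventually_nhds
        (eventually_abs_sub_lt (0:ℝ) (zero_lt_one)), self_mem_nhdsWithin] with x hx hx'
      have hxne : x ≠ 0 := hx'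
      rw [sub_zero] at hx
      have hb := Real.sin_bound hx.le
      have hx3 : x^3 ≠ 0 := pow_ne_zero _ hxne
      have heq : (Real.sin x - x)/x^3 - (-(1/6)) = (Real.sin x - (x - x^3/6))/x^3 := by
        field_simp; ring
      rw [Real.norm_eq_abs, heq, abs_div]
      rw [div_le_iff₀ (by positivity)]
      calc |Real.sin x - (x - x^3/6)| ≤ |x|^4 * (5/96) := hb.trans (by
          have h4 : 0 ≤ |x|^4 := by positivity
          nlinarith [abs_nonneg x, mul_le_mul_of_nonneg_left hx.le h4])
        _ = |x| * (5/96) * |x^3| := by rw [abs_pow]; ring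
    refine squeeze_zero_norm' hb ?_
    have : Tendsto (fun x : ℝ => |x| * (5/96)) (𝓝 0) (𝓝 (|(0:ℝ)| * (5/96))) :=
      (continuous_abs.tendsto 0).mul_const _
    simpa using this.mono_left nhdsWithin_le_nhds
  have := h0.add (tendsto_const_nhds (x := (-(1/6) : ℝ)))
  simpa using this

lemma tendsto_mul_punct (c : ℝ) (hc : c ≠ 0) :
    Tendsto (fun h : ℝ => c * h) (𝓝[>] (0:ℝ)) (𝓝[≠] 0) := by
  rw [tendsto_nhdsWithin_iff]
  constructor
  · have : Tendsto (fun h : ℝ => c * h) (𝓝 0) (𝓝 (c * 0)) :=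
      (continuous_const.mul continuous_id).tendsto 0
    simpa using this.mono_left nhdsWithin_le_nhds
  · filter_upwards [self_mem_nhdsWithin] with h hh
    exact mul_ne_zero hc (ne_of_gt hh)

lemma lim_sin_sub (c : ℝ) (hc : c ≠ 0) :
    Tendsto (fun h : ℝ => (Real.sin (c*h) - c*h)/h^3) (𝓝[>] (0:ℝ)) (𝓝 (-(c^3/6))) := by
  have comp := (lim_slope_core.comp (tendsto_mul_punct c hc)).const_mul (c^3)
  have heq : ∀ᶠ h : ℝ in 𝓝[>] (0:ℝ),
      c^3 * ((fun x : ℝ => (Real.sin x - x)/x^3) ∘ (fun h => c*h)) h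
        = (Real.sin (c*h) - c*h)/h^3 := by
    filter_upwards [self_mem_nhdsWithin] with h hh
    have hne : h ≠ 0 := ne_of_gt hh
    simp only [Function.comp]
    field_simp
  have := comp.congr' heq
  convert this using 2
  ring

lemma lim_sin_div (c : ℝ) (hc : c ≠ 0) :
    Tendsto (fun h : ℝ => Real.sin (c*h)/h) (𝓝[>] (0:ℝ)) (𝓝 c) := by
  have hd : HasDerivAt (fun h : ℝ => Real.sin (c*h)) c 0 := by
    have := (Real.hasDerivAt_sin (c*0)).comp 0 ((hasDerivAt_id 0).const_mul c)
    simpa [Function.comp_def] using this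
  have := hasDerivAt_iff_tendsto_slope.mp hd
  have h2 := this.mono_left (nhdsWithin_mono 0 (fun x hx => ne_of_gt hx : Set.Ioi (0:ℝ) ⊆ {x | x ≠ 0}))
  refine h2.congr' ?_
  filter_upwards [self_mem_nhdsWithin] with h hh
  simp [slope_def_field, div_eq_div_iff (ne_of_gt (show (0:ℝ) < h from hh))]

lemma lim_sin_sq (c : ℝ) (hc : c ≠ 0) :
    Tendsto (fun h : ℝ => (Real.sin (c*h)^2 - (c*h)^2)/h^4) (𝓝[>] (0:ℝ)) (𝓝 (-(c^4/3))) := by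
  have h1 := (lim_sin_sub c hc).mul ((lim_sin_div c hc).add (tendsto_const_nhds (x := c)))
  have heq : ∀ᶠ h : ℝ in 𝓝[>] (0:ℝ),
      ((Real.sin (c*h) - c*h)/h^3) * (Real.sin (c*h)/h + c) = (Real.sin (c*h)^2 - (c*h)^2)/h^4 := by
    filter_upwards [self_mem_nhdsWithin] with h hh
    have hne : h ≠ 0 := ne_of_gt hh
    field_simp
    ring
  have := h1.congr' heq
  convert this using 2
  ring

noncomputable def Af (kappa p : ℝ) (j : ℕ) (h : ℝ) : ℝ :=
  2^(j+2)*kappa/(3^j*h^2)*Real.sin (p*h/2)^(2*j+2)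

noncomputable def Bf (lam p : ℝ) (j : ℕ) (h : ℝ) : ℝ :=
  2^j*lam/(3^j*h)*Real.sin (p*h)*Real.sin (p*h/2)^(2*j)

lemma hS (p : ℝ) (hp : p ≠ 0) :
    Tendsto (fun h : ℝ => Real.sin (p*h/2)/h) (𝓝[>] (0:ℝ)) (𝓝 (p/2)) := by
  have := lim_sin_div (p/2) (by simpa using hp)
  refine this.congr (fun h => ?_)
  ring_nf

lemma pow26 (p : ℝ) (j : ℕ) : (2:ℝ)^(j+2) * (p/2)^(2*j+2) / 3^j = p^(2*j+2)/6^j := by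
  have h6 : (6:ℝ)^j = 2^j * 3^j := by rw [← mul_pow]; norm_num
  have h2 : (2:ℝ)^(2*j+2) = 2^(j+2) * 2^j := by rw [← pow_add]; ring_nf
  rw [div_pow, h6, h2]
  have : (2:ℝ) ≠ 0 := two_ne_zero
  field_simp

lemma lim_Af (kappa p : ℝ) (hp : p ≠ 0) (j : ℕ) :
    Tendsto (fun h => Af kappa p j h / h^(2*j)) (𝓝[>] (0:ℝ))
      (𝓝 (kappa*p^(2*j+2)/6^j)) := by
  have h1 := ((hS p hp).pow (2*j+2)).const_mul (2^(j+2)*kappa/3^j)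
  have heq : ∀ᶠ h : ℝ in 𝓝[>] (0:ℝ),
      2^(j+2)*kappa/3^j * (Real.sin (p*h/2)/h)^(2*j+2) = Af kappa p j h / h^(2*j) := by
    filter_upwards [self_mem_nhdsWithin] with h hh
    have hne : h ≠ 0 := ne_of_gt hh
    unfold Af
    rw [div_pow, pow_add h (2*j) 2]
    field_simp
  have := h1.congr' heq
  convert this using 2
  have h6 : (6:ℝ)^j = 2^j * 3^j := by rw [← mul_pow]; norm_num
  have h2 : (2:ℝ)^(2*j+2) = 2^(j+2) * 2^j := by rw [← pow_add]; ring_nf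
  rw [div_pow, h6, h2]
  field_simp

lemma lim_Bf (lam p : ℝ) (hp : p ≠ 0) (j : ℕ) :
    Tendsto (fun h => Bf lam p j h / h^(2*j)) (𝓝[>] (0:ℝ))
      (𝓝 (lam*p^(2*j+1)/6^j)) := by
  have h1 := (((hS p hp).pow (2*j)).mul (lim_sin_div p hp)).const_mul (2^j*lam/3^j)
  have heq : ∀ᶠ h : ℝ in 𝓝[>] (0:ℝ),
      2^j*lam/3^j * ((Real.sin (p*h/2)/h)^(2*j) * (Real.sin (p*h)/h))
        = Bf lam p j h / h^(2*j) := by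
    filter_upwards [self_mem_nhdsWithin] with h hh
    have hne : h ≠ 0 := ne_of_gt hh
    unfold Bf
    rw [div_pow]
    field_simp
  have := h1.congr' heq
  convert this using 2
  have h6 : (6:ℝ)^j = 2^j * 3^j := by rw [← mul_pow]; norm_num
  have h2 : (2:ℝ)^(2*j) = 2^j * 2^j := by rw [← pow_add]; ring_nf
  rw [div_pow, h6, h2]
  field_simp
  ring

noncomputable def LR (kappa p : ℝ) (j : ℕ) : ℝ :=
  if j = 0 then -(kappa*p^4/12) else if j = 1 then kappa*p^4/6 else 0

noncomputable def LI (lam p : ℝ) (j : ℕ) : ℝ :=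
  if j = 0 then -(lam*p^3/6) else if j = 1 then lam*p^3/6 else 0

lemma lim_pow_small (k : ℕ) :
    Tendsto (fun h : ℝ => h^(2*k+2)) (𝓝[>] (0:ℝ)) (𝓝 0) := by
  have := ((continuous_pow (2*k+2)).tendsto (0:ℝ)).mono_left
    (nhdsWithin_le_nhds (s := Set.Ioi (0:ℝ)))
  simpa [zero_pow] using this

lemma lim_fR (kappa p : ℝ) (hp : p ≠ 0) (j : ℕ) :
    Tendsto (fun h => (Af kappa p j h - (if j = 0 then kappa*p^2 else 0))/h^2)
      (𝓝[>] (0:ℝ)) (𝓝 (LR kappa p j)) := by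
  match j with
  | 0 =>
    have h1 := (lim_sin_sq (p/2) (by simpa using hp)).const_mul (4*kappa)
    have heq : ∀ᶠ h : ℝ in 𝓝[>] (0:ℝ),
        4*kappa * ((Real.sin (p/2*h)^2 - (p/2*h)^2)/h^4)
          = (Af kappa p 0 h - (if (0:ℕ) = 0 then kappa*p^2 else 0))/h^2 := by
      filter_upwards [self_mem_nhdsWithin] with h hh
      have hne : h ≠ 0 := ne_of_gt hh
      simp only [Af, if_pos rfl, pow_zero, pow_one, ite_true]
      rw [show p*h/2 = p/2*h by ring]
      field_simp
      ring
    have := h1.congr' heq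
    convert this using 2
    simp only [LR, if_pos rfl]
    norm_num
    ring
  | 1 =>
    have h1 := lim_Af kappa p hp 1
    have heq : (fun h => Af kappa p 1 h / h^(2*1))
        = fun h => (Af kappa p 1 h - (if (1:ℕ) = 0 then kappa*p^2 else 0))/h^2 := by
      funext h; norm_num
    rw [heq] at h1
    convert h1 using 2
    simp only [LR]
    norm_num
  | (k+2) =>
    have h1 := (lim_Af kappa p hp (k+2)).mul (lim_pow_small k)
    have heq : ∀ᶠ h : ℝ in 𝓝[>] (0:ℝ),
        (Af kappa p (k+2) h / h^(2*(k+2))) * h^(2*k+2)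
          = (Af kappa p (k+2) h - (if (k+2:ℕ) = 0 then kappa*p^2 else 0))/h^2 := by
      filter_upwards [self_mem_nhdsWithin] with h hh
      have hne : h ≠ 0 := ne_of_gt hh
      simp only [Nat.add_eq_zero, and_false, if_false, sub_zero, if_neg, OfNat.ofNat_ne_zero]
      rw [show 2*(k+2) = (2*k+2)+2 by ring, pow_add]
      field_simp
    have := h1.congr' heq
    convert this using 2
    simp only [LR, if_neg (by omega : ¬(k+2 = 0)), if_neg (by omega : ¬(k+2 = 1))]
    ring

lemma lim_fI (lam p : ℝ) (hp : p ≠ 0) (j : ℕ) :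
    Tendsto (fun h => (Bf lam p j h - (if j = 0 then lam*p else 0))/h^2)
      (𝓝[>] (0:ℝ)) (𝓝 (LI lam p j)) := by
  match j with
  | 0 =>
    have h1 := (lim_sin_sub p hp).const_mul lam
    have heq : ∀ᶠ h : ℝ in 𝓝[>] (0:ℝ),
        lam * ((Real.sin (p*h) - p*h)/h^3)
          = (Bf lam p 0 h - (if (0:ℕ) = 0 then lam*p else 0))/h^2 := by
      filter_upwards [self_mem_nhdsWithin] with h hh
      have hne : h ≠ 0 := ne_of_gt hh
      simp only [Bf, if_pos rfl, pow_zero, pow_one, ite_true]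
      field_simp
      ring
    have := h1.congr' heq
    convert this using 2
    simp only [LI]
    norm_num
    ring
  | 1 =>
    have h1 := lim_Bf lam p hp 1
    have heq : (fun h => Bf lam p 1 h / h^(2*1))
        = fun h => (Bf lam p 1 h - (if (1:ℕ) = 0 then lam*p else 0))/h^2 := by
      funext h; norm_num
    rw [heq] at h1
    convert h1 using 2
    simp only [LI]
    norm_num
  | (k+2) =>
    have h1 := (lim_Bf lam p hp (k+2)).mul (lim_pow_small k)
    have heq : ∀ᶠ h : ℝ in 𝓝[>] (0:ℝ),
        (Bf lam p (k+2) h / h^(2*(k+2))) * h^(2*k+2)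
          = (Bf lam p (k+2) h - (if (k+2:ℕ) = 0 then lam*p else 0))/h^2 := by
      filter_upwards [self_mem_nhdsWithin] with h hh
      have hne : h ≠ 0 := ne_of_gt hh
      simp only [Nat.add_eq_zero, and_false, if_false, sub_zero, if_neg, OfNat.ofNat_ne_zero]
      rw [show 2*(k+2) = (2*k+2)+2 by ring, pow_add]
      field_simp
    have := h1.congr' heq
    convert this using 2
    simp only [LI, if_neg (by omega : ¬(k+2 = 0)), if_neg (by omega : ¬(k+2 = 1))]
    ring

lemma lim_R (kappa p : ℝ) (hp : p ≠ 0) (m : ℕ) (hm : 1 ≤ m) :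
    Tendsto (fun h => (∑ j ∈ range (m+1), Af kappa p j h - kappa*p^2)/h^2)
      (𝓝[>] (0:ℝ)) (𝓝 (kappa*p^4/12)) := by
  have hsum := tendsto_finset_sum (range (m+1))
    (fun j (_ : j ∈ range (m+1)) => lim_fR kappa p hp j)
  have heq : (fun h => ∑ j ∈ range (m+1),
      (Af kappa p j h - (if j = 0 then kappa*p^2 else 0))/h^2)
      = fun h => (∑ j ∈ range (m+1), Af kappa p j h - kappa*p^2)/h^2 := by
    funext h
    rw [← Finset.sum_div, Finset.sum_sub_distrib, Finset.sum_ite_eq' (range (m+1)) 0]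
    simp
  rw [heq] at hsum
  convert hsum using 2
  have hsub : range 2 ⊆ range (m+1) := Finset.range_subset_range.mpr (by omega)
  rw [← Finset.sum_subset hsub (fun j _ hj => by
    have hj2 : 2 ≤ j := by
      by_contra hc
      exact hj (Finset.mem_range.mpr (by omega))
    simp only [LR, if_neg (by omega : ¬(j = 0)), if_neg (by omega : ¬(j = 1))])]
  rw [Finset.sum_range_succ, Finset.sum_range_one]
  simp only [LR]
  norm_num
  ring

lemma lim_I (lam p : ℝ) (hp : p ≠ 0) (m : ℕ) (hm : 1 ≤ m) :
    Tendsto (fun h => (∑ j ∈ range (m+1), Bf lam p j h - lam*p)/h^2)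
      (𝓝[>] (0:ℝ)) (𝓝 0) := by
  have hsum := tendsto_finset_sum (range (m+1))
    (fun j (_ : j ∈ range (m+1)) => lim_fI lam p hp j)
  have heq : (fun h => ∑ j ∈ range (m+1),
      (Bf lam p j h - (if j = 0 then lam*p else 0))/h^2)
      = fun h => (∑ j ∈ range (m+1), Bf lam p j h - lam*p)/h^2 := by
    funext h
    rw [← Finset.sum_div, Finset.sum_sub_distrib, Finset.sum_ite_eq' (range (m+1)) 0]
    simp
  rw [heq] at hsum
  convert hsum using 2
  have hsub : range 2 ⊆ range (m+1) := Finset.range_subset_range.mpr (by omega)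
  rw [← Finset.sum_subset hsub (fun j _ hj => by
    have hj2 : 2 ≤ j := by
      by_contra hc
      exact hj (Finset.mem_range.mpr (by omega))
    simp only [LI, if_neg (by omega : ¬(j = 0)), if_neg (by omega : ¬(j = 1))])]
  rw [Finset.sum_range_succ, Finset.sum_range_one]
  simp only [LI]
  norm_num

lemma absSq (kappa lam p h : ℝ) (m : ℕ) :
    ‖omegaCorr kappa lam p h m
        - (-((kappa * p^2 : ℝ) : ℂ) - Complex.I * ((lam * p : ℝ) : ℂ))‖ ^ 2
      = (∑ j ∈ range (m+1), Af kappa p j h - kappa*p^2)^2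
        + (∑ j ∈ range (m+1), Bf lam p j h - lam*p)^2 := by
  rw [Complex.sq_norm, Complex.normSq_apply]
  simp only [omegaCorr, Af, Bf, Complex.sub_re, Complex.sub_im, Complex.neg_re, Complex.neg_im,
    Complex.re_sum, Complex.im_sum, Complex.add_re, Complex.add_im, Complex.mul_re,
    Complex.mul_im, Complex.I_re, Complex.I_im, Complex.ofReal_re, Complex.ofReal_im,
    zero_mul, mul_zero, sub_zero, zero_sub, add_zero, zero_add, one_mul]
  ring

theorem stmt_15 (kappa lam p : ℝ) (n : ℕ) (hkappa : 0 < kappa) (hp : p ≠ 0)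
    (hn : 1 ≤ n) :
    Filter.Tendsto
      (fun h : ℝ =>
        (‖omegaCorr kappa lam p h (n+1)
            - (-((kappa * p^2 : ℝ) : ℂ) - Complex.I * ((lam * p : ℝ) : ℂ))‖ ^ 2
          - ‖omegaCorr kappa lam p h n
            - (-((kappa * p^2 : ℝ) : ℂ) - Complex.I * ((lam * p : ℝ) : ℂ))‖ ^ 2)
          / h ^ (2*n+4))
      (nhdsWithin 0 (Set.Ioi 0))
      (nhds (kappa^2 * p^(2*n+8) / 6^(n+2))) := by
  have hA := lim_Af kappa p hp (n+1)
  have hB := lim_Bf lam p hp (n+1)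
  have hR := (lim_R kappa p hp (n+1) (by omega)).add (lim_R kappa p hp n hn)
  have hI := (lim_I lam p hp (n+1) (by omega)).add (lim_I lam p hp n hn)
  have main := (hA.mul hR).add (hB.mul hI)
  have heq : ∀ᶠ h : ℝ in 𝓝[>] (0:ℝ),
      (Af kappa p (n+1) h / h^(2*(n+1)))
          * ((∑ j ∈ range (n+1+1), Af kappa p j h - kappa*p^2)/h^2
            + (∑ j ∈ range (n+1), Af kappa p j h - kappa*p^2)/h^2)
        + (Bf lam p (n+1) h / h^(2*(n+1)))
          * ((∑ j ∈ range (n+1+1), Bf lam p j h - lam*p)/h^2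
            + (∑ j ∈ range (n+1), Bf lam p j h - lam*p)/h^2)
      = (‖omegaCorr kappa lam p h (n+1)
            - (-((kappa * p^2 : ℝ) : ℂ) - Complex.I * ((lam * p : ℝ) : ℂ))‖ ^ 2
          - ‖omegaCorr kappa lam p h n
            - (-((kappa * p^2 : ℝ) : ℂ) - Complex.I * ((lam * p : ℝ) : ℂ))‖ ^ 2)
          / h ^ (2*n+4) := by
    filter_upwards [self_mem_nhdsWithin] with h hh
    have hne : h ≠ 0 := ne_of_gt hh
    rw [absSq, absSq]
    rw [Finset.sum_range_succ (fun j => Af kappa p j h) (n+1),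
      Finset.sum_range_succ (fun j => Bf lam p j h) (n+1)]
    set Sa := ∑ j ∈ range (n+1), Af kappa p j h with hSa
    set Sb := ∑ j ∈ range (n+1), Bf lam p j h with hSb
    set A := Af kappa p (n+1) h with hAd
    set B := Bf lam p (n+1) h with hBd
    rw [show 2*n+4 = (2*(n+1))+2 by ring, pow_add]
    have h2 : h^2 ≠ 0 := pow_ne_zero _ hne
    have h2n : h^(2*(n+1)) ≠ 0 := pow_ne_zero _ hne
    field_simp
    ring
  have final := main.congr' heq
  convert final using 2
  have hp1 : p^(2*n+8) = p^(2*(n+1)+2) * p^4 := by rw [← pow_add]; ring_nf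
  have h61 : (6:ℝ)^(n+2) = 6^(n+1)*6 := by rw [← pow_succ]
  rw [hp1, h61]
  field_simp
  ring
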